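/- Let m = 2^k · r with k ≥ 1 and r odd. If the equation φ(x) = 2r has exactly four solutions, then the equation φ(x) = m has at least two solutions. -/

import Mathlib

private lemma odd_le_totient_sq : ∀ n : ℕ, Odd n → n ≤ Nat.totient n ^ 2 := by
  intro n
  induction n using Nat.strong_induction_on with
  | _ n ih =>
    intro hn
    rcases eq_or_ne n 1 with rfl | h1
    · simp
    have hn0 : n ≠ 0 := by rintro rfl; simp [Nat.odd_iff] at hn
    set p := n.minFac with hp
    have hpp : p.Prime := Nat.minFac_prime h1
    have hpd : p ∣ n := Nat.minFac_dvd n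
    have hpodd : p ≠ 2 := by
      rintro h2
      exact (Nat.not_odd_iff_even.mpr (even_iff_two_dvd.mpr (h2 ▸ hpd))) hn
    have hp3 : 3 ≤ p := by
      rcases hpp.two_le.lt_or_eq with h | h
      · omega
      · omega
    set a := n.factorization p with ha
    have ha1 : 1 ≤ a := (hpp.dvd_iff_one_le_factorization hn0).mp hpd
    have hsplit : p ^ a * (n / p ^ a) = n := Nat.ordProj_mul_ordCompl_eq_self n p
    have hcop : Nat.Coprime (p ^ a) (n / p ^ a) :=
      Nat.Coprime.pow_left _ (Nat.coprime_ordCompl hpp hn0)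
    have hqlt : n / p ^ a < n := by
      apply Nat.div_lt_self (Nat.pos_of_ne_zero hn0)
      exact Nat.one_lt_pow (by omega) hpp.one_lt
    have hqodd : Odd (n / p ^ a) := by
      rcases Nat.even_or_odd (n / p ^ a) with he | ho
      · exfalso
        have : 2 ∣ n := dvd_trans (even_iff_two_dvd.mp he) (Nat.ordCompl_dvd n p)
        exact (Nat.not_odd_iff_even.mpr (even_iff_two_dvd.mpr this)) hn
      · exact ho
    have hq := ih _ hqlt hqodd
    -- prime power bound
    have hpt : Nat.totient (p ^ a) = p ^ (a - 1) * (p - 1) :=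
      Nat.totient_prime_pow hpp (by omega)
    have hppow : p ^ a ≤ Nat.totient (p ^ a) ^ 2 := by
      rw [hpt, mul_pow]
      have h1' : p ^ a = p ^ (a - 1) * p := by
        rw [← pow_succ]; congr 1; omega
      rw [h1']
      have hA : p ^ (a-1) ≤ (p ^ (a-1)) ^ 2 := Nat.le_self_pow (by norm_num) _
      have hB : p ≤ (p - 1) ^ 2 := by
        obtain ⟨q, hq2⟩ : ∃ q, p = q + 2 := ⟨p - 2, by omega⟩
        rw [hq2, show q + 2 - 1 = q + 1 from rfl]
        nlinarith
      exact Nat.mul_le_mul hA hB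
    calc n = p ^ a * (n / p ^ a) := hsplit.symm
      _ ≤ Nat.totient (p ^ a) ^ 2 * Nat.totient (n / p ^ a) ^ 2 :=
          Nat.mul_le_mul hppow hq
      _ = (Nat.totient (p ^ a) * Nat.totient (n / p ^ a)) ^ 2 := (mul_pow _ _ _).symm
      _ = Nat.totient n ^ 2 := by rw [← Nat.totient_mul hcop, hsplit]

private lemma le_two_mul_totient_sq (n : ℕ) : n ≤ 2 * Nat.totient n ^ 2 := by
  rcases eq_or_ne n 0 with rfl | hn0
  · simp
  set a := n.factorization 2 with ha
  have hsplit : 2 ^ a * (n / 2 ^ a) = n := Nat.ordProj_mul_ordCompl_eq_self n 2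
  have hcop : Nat.Coprime (2 ^ a) (n / 2 ^ a) :=
    Nat.Coprime.pow_left _ (Nat.coprime_ordCompl Nat.prime_two hn0)
  have hqodd : Odd (n / 2 ^ a) := by
    rcases Nat.even_or_odd (n / 2 ^ a) with he | ho
    · exfalso
      have h2 : 2 ∣ n / 2 ^ a := even_iff_two_dvd.mp he
      have hco := Nat.coprime_ordCompl Nat.prime_two hn0
      have h21 := Nat.dvd_gcd (dvd_refl 2) h2
      rw [Nat.Coprime] at hco
      rw [hco] at h21
      exact absurd h21 (by norm_num)
    · exact ho
  have hq := odd_le_totient_sq _ hqodd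
  have htn : Nat.totient n = Nat.totient (2 ^ a) * Nat.totient (n / 2 ^ a) := by
    rw [← Nat.totient_mul hcop, hsplit]
  rcases Nat.eq_zero_or_pos a with ha0 | hapos
  · have hone : n / 2 ^ a = n := by rw [ha0]; simp
    rw [hone] at hq
    nlinarith [hq]
  · have h2t : Nat.totient (2 ^ a) = 2 ^ (a - 1) := by
      rw [Nat.totient_prime_pow Nat.prime_two hapos]; simp
    have key : 2 ^ a ≤ 2 * Nat.totient (2 ^ a) ^ 2 := by
      rw [h2t, ← pow_mul]
      have : a ≤ 1 + (a - 1) * 2 := by omega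
      calc 2 ^ a ≤ 2 ^ (1 + (a-1)*2) := Nat.pow_le_pow_right (by norm_num) this
        _ = 2 * 2 ^ ((a-1)*2) := by rw [pow_add, pow_one]
    calc n = 2 ^ a * (n / 2 ^ a) := hsplit.symm
      _ ≤ (2 * Nat.totient (2 ^ a) ^ 2) * Nat.totient (n / 2 ^ a) ^ 2 :=
          Nat.mul_le_mul key hq
      _ = 2 * (Nat.totient (2 ^ a) * Nat.totient (n / 2 ^ a)) ^ 2 := by ring
      _ = 2 * Nat.totient n ^ 2 := by rw [htn]

private lemma totient_fiber_finite (m : ℕ) : {x : ℕ | Nat.totient x = m}.Finite := by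
  apply (Set.finite_Iic (2 * m ^ 2)).subset
  intro x hx
  simp only [Set.mem_setOf_eq] at hx
  simpa [Set.mem_Iic, hx] using le_two_mul_totient_sq x

private lemma coprime_two_of_odd {c : ℕ} (hc : Odd c) : Nat.Coprime 2 c := by
  rw [Nat.prime_two.coprime_iff_not_dvd]
  intro h
  exact (Nat.not_odd_iff_even.mpr (even_iff_two_dvd.mpr h)) hc

private lemma half_sol (r : ℕ) (hr : Odd r) (hr1 : r ≠ 1) {x : ℕ}
    (hx : Nat.totient x = 2 * r) (hxe : Even x) :
    Odd (x / 2) ∧ Nat.totient (x / 2) = 2 * r := by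
  have hr0 : 0 < r := hr.pos
  obtain ⟨c, hcc⟩ : ∃ c, x = 2 * c := ⟨x / 2, by
    rcases hxe with ⟨d, hd⟩; omega⟩
  subst hcc
  have hc0 : c ≠ 0 := by
    rintro rfl
    simp [Nat.totient_zero] at hx
    omega
  have hcodd : Odd c := by
    by_contra hce
    rw [Nat.not_odd_iff_even] at hce
    have h2c : 2 ∣ c := even_iff_two_dvd.mp hce
    have := Nat.totient_mul_of_prime_of_dvd Nat.prime_two h2c
    rw [hx] at this
    have hrc : r = Nat.totient c := by omega
    rcases eq_or_ne c 2 with rfl | hc2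
    · simp [Nat.totient_two] at hrc
      exact hr1 hrc
    · have hc3 : 2 < c := by
        rcases hce with ⟨d, hd⟩; omega
      have := Nat.totient_even hc3
      rw [← hrc] at this
      exact (Nat.not_odd_iff_even.mpr this) hr
  have hdiv : 2 * c / 2 = c := by omega
  have ht : Nat.totient (2 * c) = Nat.totient c := by
    rw [Nat.totient_mul (coprime_two_of_odd hcodd), Nat.totient_two, one_mul]
  exact ⟨by rw [hdiv]; exact hcodd, by rw [hdiv, ← ht, hx]⟩

private lemma sol_lift (k r : ℕ) (hk : 1 ≤ k) {c : ℕ} (hc : Odd c)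
    (hsol : Nat.totient c = 2 * r) : Nat.totient (2 ^ k * c) = 2 ^ k * r := by
  have hcop : Nat.Coprime (2 ^ k) c := Nat.Coprime.pow_left _ (coprime_two_of_odd hc)
  rw [Nat.totient_mul hcop, hsol, Nat.totient_prime_pow Nat.prime_two (by omega)]
  have hk1 : k - 1 + 1 = k := by omega
  calc 2 ^ (k - 1) * (2 - 1) * (2 * r) = 2 ^ (k - 1) * 2 * r := by ring
    _ = 2 ^ k * r := by rw [← pow_succ, hk1]

private lemma two_le_ncard_of_pair {a b m : ℕ} (hab : a ≠ b)
    (ha : Nat.totient a = m) (hb : Nat.totient b = m) :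
    2 ≤ {x : ℕ | Nat.totient x = m}.ncard := by
  have hsub : {a, b} ⊆ {x : ℕ | Nat.totient x = m} := by
    intro y hy
    rcases hy with rfl | rfl
    · exact ha
    · exact hb
  calc 2 = ({a, b} : Set ℕ).ncard := (Set.ncard_pair hab).symm
    _ ≤ _ := Set.ncard_le_ncard hsub (totient_fiber_finite m)

theorem multiplicity_ge_two_of_A_two_r_eq_four
    (k r m : ℕ) (hk : 1 ≤ k) (hr : Odd r) (hm : m = 2 ^ k * r)
    (h4 : {x : ℕ | Nat.totient x = 2 * r}.ncard = 4) :
    2 ≤ {x : ℕ | Nat.totient x = m}.ncard := by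
  have hr0 : 0 < r := hr.pos
  rcases eq_or_ne r 1 with rfl | hr1
  · -- r = 1 : use 2^(k+1) and 3 * 2^k
    have h1 : Nat.totient (2 ^ (k + 1)) = m := by
      rw [Nat.totient_prime_pow Nat.prime_two (by omega), hm]
      simp
    have h2 : Nat.totient (3 * 2 ^ k) = m := by
      have hcop : Nat.Coprime 3 (2 ^ k) := Nat.Coprime.pow_right _ (by decide)
      rw [Nat.totient_mul hcop, Nat.totient_prime_pow Nat.prime_two (by omega),
        show Nat.totient 3 = 2 from rfl, hm]
      have hk1 : k - 1 + 1 = k := by omega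
      calc 2 * (2 ^ (k - 1) * (2 - 1)) = 2 ^ (k - 1) * 2 := by ring
        _ = 2 ^ k * 1 := by rw [← pow_succ, hk1, mul_one]
    have hne : 2 ^ (k + 1) ≠ 3 * 2 ^ k := by
      have hpos : 0 < 2 ^ k := pow_pos (by norm_num) k
      rw [pow_succ]
      omega
    exact two_le_ncard_of_pair hne h1 h2
  · -- r > 1 : find two distinct odd solutions of φ x = 2r
    have hSne : {x : ℕ | Nat.totient x = 2 * r}.Nonempty :=
      Set.nonempty_of_ncard_ne_zero (by omega)
    obtain ⟨a, b, haS, hbS, haodd, hbodd, hab⟩ :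
        ∃ a b : ℕ, Nat.totient a = 2 * r ∧ Nat.totient b = 2 * r ∧
          Odd a ∧ Odd b ∧ a ≠ b := by
      by_contra hcon
      push_neg at hcon
      obtain ⟨x, hxS⟩ := hSne
      simp only [Set.mem_setOf_eq] at hxS
      obtain ⟨n, hnodd, hnS⟩ : ∃ n : ℕ, Odd n ∧ Nat.totient n = 2 * r := by
        rcases Nat.even_or_odd x with hxe | hxo
        · obtain ⟨h1, h2⟩ := half_sol r hr hr1 hxS hxe
          exact ⟨x / 2, h1, h2⟩
        · exact ⟨x, hxo, hxS⟩
      have hsub : {x : ℕ | Nat.totient x = 2 * r} ⊆ {n, 2 * n} := by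
        intro y hy
        simp only [Set.mem_setOf_eq] at hy
        rcases Nat.even_or_odd y with hye | hyo
        · obtain ⟨h1, h2⟩ := half_sol r hr hr1 hy hye
          have : y / 2 = n := hcon _ n h2 hnS h1 hnodd
          right
          simp only [Set.mem_singleton_iff]
          rcases hye with ⟨d, hd⟩
          omega
        · left
          exact hcon y n hy hnS hyo hnodd
      have hle := Set.ncard_le_ncard hsub
        ((Set.finite_singleton _).insert _)
      have h2' : ({n, 2 * n} : Set ℕ).ncard ≤ 2 := by
        calc ({n, 2 * n} : Set ℕ).ncard ≤ ({2 * n} : Set ℕ).ncard + 1 :=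
              Set.ncard_insert_le _ _
          _ = 2 := by rw [Set.ncard_singleton]
      omega
    have h1 := sol_lift k r hk haodd haS
    have h2 := sol_lift k r hk hbodd hbS
    have hne : 2 ^ k * a ≠ 2 ^ k * b := fun h =>
      hab (Nat.eq_of_mul_eq_mul_left (pow_pos (by norm_num) k) h)
    exact two_le_ncard_of_pair hne (hm ▸ h1) (hm ▸ h2)
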